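/- Let A be a central hyperplane arrangement of rank d with lattice of flats L(A) and Möbius function μ. Then the polynomial identity q^{2d} · h^{br}_A(q^{−1}) = Σ_F h^{br}_{A_F}(q) (q−1)^{crk F} Σ_{G ⊇ F} χ_{A^G}(q) r(A^F_G) holds, where all quantities are defined via the Möbius function: χ_A(q) = Σ_F μ(F) q^{crk F}, r(A) = Σ_F (−1)^{rk F} μ(F), and h^{br}_A(q) = (−1)^{rk A} Σ_F μ(F) q^{rk F} (q−1)^{crk F}, with localization A_F and restriction A^F having lattices of flats identified with the intervals [∅, F] and [F, top] in L(A) respectively. -/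

import Mathlib

/- The Kazhdan-Lusztig-type recursion for the broken circuit h-polynomial:
`q^{2d} h^{br}_A(q^{-1}) = Σ_F h^{br}_{A_F}(q) (q-1)^{crk F} Σ_{G ⊇ F} χ_{A^G}(q) r(A^F_G)`,
with all quantities defined via the Möbius function of the lattice of flats. -/
open Classical in
theorem stmt_6 (L : Type*) [Fintype L] [Lattice L] [BoundedOrder L]
    (d : ℕ) (rk : L → ℕ) (hmono : Monotone rk) (hbot : rk ⊥ = 0) (htop : rk ⊤ = d)
    (μ : L → L → ℤ)
    (hzero : ∀ A B : L, ¬ A ≤ B → μ A B = 0)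
    (hrec : ∀ A C : L, A ≤ C →
      (∑ B : L, if A ≤ B ∧ B ≤ C then μ B C else 0) = if A = C then 1 else 0)
    (q : ℚ) (hq : q ≠ 0) :
    q ^ (2 * d) *
        ((-1 : ℚ) ^ d * ∑ F : L, (μ ⊥ F : ℚ) * q⁻¹ ^ (rk F) * (q⁻¹ - 1) ^ (d - rk F)) =
      ∑ F : L,
        ((-1 : ℚ) ^ (rk F) *
            ∑ H : L, if H ≤ F then
              (μ ⊥ H : ℚ) * q ^ (rk H) * (q - 1) ^ (rk F - rk H) else 0) *
          (q - 1) ^ (d - rk F) *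
          ∑ G : L, if F ≤ G then
              (∑ I : L, if G ≤ I then (μ G I : ℚ) * q ^ (d - rk I) else 0) *
              (∑ J : L, if F ≤ J ∧ J ≤ G then
                (-1 : ℚ) ^ (rk J - rk F) * (μ F J : ℚ) else 0)
            else 0 := by
  classical
  have hrkd : ∀ F : L, rk F ≤ d := fun F => htop ▸ hmono le_top
  -- cast version of the Möbius recursion, with no hypothesis A ≤ C
  have hrec' : ∀ A C : L,
      (∑ B : L, if A ≤ B ∧ B ≤ C then (μ B C : ℚ) else 0) = if A = C then 1 else 0 := by
    intro A C
    by_cases h : A ≤ C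
    · have h2 := hrec A C h
      calc (∑ B : L, if A ≤ B ∧ B ≤ C then (μ B C : ℚ) else 0)
          = ((∑ B : L, if A ≤ B ∧ B ≤ C then μ B C else 0 : ℤ) : ℚ) := by
            push_cast; rfl
        _ = _ := by rw [h2]; split <;> simp
    · have hne : A ≠ C := fun e => h (le_of_eq e)
      rw [if_neg hne]
      exact Finset.sum_eq_zero fun B _ => by
        rw [if_neg]; rintro ⟨h1, h2⟩; exact h (h1.trans h2)
  -- Step 1: collapse the χ·r inner double sum
  have step1 : ∀ F : L,
      (∑ G : L, if F ≤ G then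
          (∑ I : L, if G ≤ I then (μ G I : ℚ) * q ^ (d - rk I) else 0) *
          (∑ J : L, if F ≤ J ∧ J ≤ G then (-1 : ℚ) ^ (rk J - rk F) * (μ F J : ℚ) else 0)
        else 0)
      = ∑ J : L, if F ≤ J then
          (-1 : ℚ) ^ (rk J - rk F) * (μ F J : ℚ) * q ^ (d - rk J) else 0 := by
    intro F
    have e1 : (∑ G : L, if F ≤ G then
          (∑ I : L, if G ≤ I then (μ G I : ℚ) * q ^ (d - rk I) else 0) *
          (∑ J : L, if F ≤ J ∧ J ≤ G then (-1 : ℚ) ^ (rk J - rk F) * (μ F J : ℚ) else 0)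
        else 0)
        = ∑ G : L, ∑ J : L, ∑ I : L,
            (if (F ≤ J ∧ J ≤ G) ∧ G ≤ I then
              ((-1 : ℚ) ^ (rk J - rk F) * (μ F J : ℚ)) * ((μ G I : ℚ) * q ^ (d - rk I))
            else 0) := by
      refine Finset.sum_congr rfl fun G _ => ?_
      by_cases hFG : F ≤ G
      · rw [if_pos hFG, mul_comm, Finset.sum_mul_sum]
        refine Finset.sum_congr rfl fun J _ => Finset.sum_congr rfl fun I _ => ?_
        split_ifs with h1 h2 h3 <;> first | ring1 | tauto
      · rw [if_neg hFG]
        refine (Finset.sum_eq_zero fun J _ => Finset.sum_eq_zero fun I _ => ?_).symm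
        rw [if_neg]
        rintro ⟨⟨h1, h2⟩, h3⟩
        exact hFG (h1.trans h2)
    rw [e1, Finset.sum_comm]
    refine Finset.sum_congr rfl fun J _ => ?_
    rw [Finset.sum_comm]
    by_cases hFJ : F ≤ J
    · rw [if_pos hFJ]
      have e2 : ∀ I : L, (∑ G : L,
          if (F ≤ J ∧ J ≤ G) ∧ G ≤ I then
            ((-1 : ℚ) ^ (rk J - rk F) * (μ F J : ℚ)) * ((μ G I : ℚ) * q ^ (d - rk I))
          else 0)
        = ((-1 : ℚ) ^ (rk J - rk F) * (μ F J : ℚ)) * q ^ (d - rk I) *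
            (∑ G : L, if J ≤ G ∧ G ≤ I then (μ G I : ℚ) else 0) := by
        intro I
        rw [Finset.mul_sum]
        refine Finset.sum_congr rfl fun G _ => ?_
        split_ifs with h1 h2 h3 <;> first | ring1 | tauto
      calc (∑ I : L, ∑ G : L,
            if (F ≤ J ∧ J ≤ G) ∧ G ≤ I then
              ((-1 : ℚ) ^ (rk J - rk F) * (μ F J : ℚ)) * ((μ G I : ℚ) * q ^ (d - rk I))
            else 0)
          = ∑ I : L, (-1 : ℚ) ^ (rk J - rk F) * (μ F J : ℚ) * q ^ (d - rk I) *
              (if J = I then 1 else 0) := by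
            refine Finset.sum_congr rfl fun I _ => ?_
            rw [e2 I, hrec' J I]
        _ = (-1 : ℚ) ^ (rk J - rk F) * (μ F J : ℚ) * q ^ (d - rk J) := by
            simp [mul_ite, Finset.sum_ite_eq]
    · rw [if_neg hFJ]
      refine Finset.sum_eq_zero fun I _ => Finset.sum_eq_zero fun G _ => ?_
      rw [if_neg]
      rintro ⟨⟨h1, _⟩, _⟩
      exact hFJ h1
  -- rewrite RHS using step1, then expand into a triple sum over F, J, H
  have e3 : (∑ F : L,
        ((-1 : ℚ) ^ (rk F) *
            ∑ H : L, if H ≤ F then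
              (μ ⊥ H : ℚ) * q ^ (rk H) * (q - 1) ^ (rk F - rk H) else 0) *
          (q - 1) ^ (d - rk F) *
          ∑ G : L, if F ≤ G then
              (∑ I : L, if G ≤ I then (μ G I : ℚ) * q ^ (d - rk I) else 0) *
              (∑ J : L, if F ≤ J ∧ J ≤ G then
                (-1 : ℚ) ^ (rk J - rk F) * (μ F J : ℚ) else 0)
            else 0)
      = ∑ F : L, ∑ J : L, ∑ H : L,
          (if H ≤ F ∧ F ≤ J then
            (μ F J : ℚ) * ((μ ⊥ H : ℚ) * q ^ (rk H) * (q - 1) ^ (d - rk H) *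
              ((-1 : ℚ) ^ (rk J) * q ^ (d - rk J)))
          else 0) := by
    refine Finset.sum_congr rfl fun F _ => ?_
    rw [step1 F, Finset.mul_sum]
    refine Finset.sum_congr rfl fun J _ => ?_
    rw [Finset.mul_sum, Finset.sum_mul, Finset.sum_mul]
    refine Finset.sum_congr rfl fun H _ => ?_
    by_cases h1 : H ≤ F
    · by_cases h2 : F ≤ J
      · rw [if_pos h1, if_pos h2, if_pos ⟨h1, h2⟩]
        have hHF : rk H ≤ rk F := hmono h1
        have hFJ : rk F ≤ rk J := hmono h2
        have hp1 : (q - 1) ^ (rk F - rk H) * (q - 1) ^ (d - rk F)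
            = (q - 1) ^ (d - rk H) := by
          rw [← pow_add]
          congr 1
          have := hrkd F
          omega
        have hp2 : (-1 : ℚ) ^ (rk F) * (-1 : ℚ) ^ (rk J - rk F) = (-1 : ℚ) ^ (rk J) := by
          rw [← pow_add]
          congr 1
          omega
        calc (-1 : ℚ) ^ (rk F) * ((μ ⊥ H : ℚ) * q ^ (rk H) * (q - 1) ^ (rk F - rk H)) *
              (q - 1) ^ (d - rk F) *
              ((-1 : ℚ) ^ (rk J - rk F) * (μ F J : ℚ) * q ^ (d - rk J))
            = ((-1 : ℚ) ^ (rk F) * (-1 : ℚ) ^ (rk J - rk F)) *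
              ((q - 1) ^ (rk F - rk H) * (q - 1) ^ (d - rk F)) *
              ((μ ⊥ H : ℚ) * q ^ (rk H) * ((μ F J : ℚ) * q ^ (d - rk J))) := by ring
          _ = _ := by rw [hp1, hp2]; ring
      · rw [if_neg h2, if_neg (show ¬(H ≤ F ∧ F ≤ J) from fun hh => h2 hh.2)]
        ring
    · rw [if_neg h1, if_neg (show ¬(H ≤ F ∧ F ≤ J) from fun hh => h1 hh.1)]
      ring
  -- collapse the sum over F, then over H
  have e4 : (∑ F : L, ∑ J : L, ∑ H : L,
        (if H ≤ F ∧ F ≤ J then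
          (μ F J : ℚ) * ((μ ⊥ H : ℚ) * q ^ (rk H) * (q - 1) ^ (d - rk H) *
            ((-1 : ℚ) ^ (rk J) * q ^ (d - rk J)))
        else 0))
      = ∑ H : L, (μ ⊥ H : ℚ) * (-1 : ℚ) ^ (rk H) * q ^ d * (q - 1) ^ (d - rk H) := by
    rw [Finset.sum_comm]
    refine Finset.sum_congr rfl fun J _ => ?_
    rw [Finset.sum_comm]
    calc (∑ H : L, ∑ F : L,
          (if H ≤ F ∧ F ≤ J then
            (μ F J : ℚ) * ((μ ⊥ H : ℚ) * q ^ (rk H) * (q - 1) ^ (d - rk H) *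
              ((-1 : ℚ) ^ (rk J) * q ^ (d - rk J)))
          else 0))
        = ∑ H : L, ((μ ⊥ H : ℚ) * q ^ (rk H) * (q - 1) ^ (d - rk H) *
            ((-1 : ℚ) ^ (rk J) * q ^ (d - rk J))) * (if H = J then 1 else 0) := by
          refine Finset.sum_congr rfl fun H _ => ?_
          rw [← hrec' H J, Finset.mul_sum]
          refine Finset.sum_congr rfl fun F _ => ?_
          split_ifs with h <;> ring1
      _ = (μ ⊥ J : ℚ) * q ^ (rk J) * (q - 1) ^ (d - rk J) *
            ((-1 : ℚ) ^ (rk J) * q ^ (d - rk J)) := by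
          simp [mul_ite, Finset.sum_ite_eq']
      _ = (μ ⊥ J : ℚ) * (-1 : ℚ) ^ (rk J) * q ^ d * (q - 1) ^ (d - rk J) := by
          have hq1 : q ^ (rk J) * q ^ (d - rk J) = q ^ d := by
            rw [← pow_add]
            congr 1
            have := hrkd J
            omega
          calc (μ ⊥ J : ℚ) * q ^ (rk J) * (q - 1) ^ (d - rk J) *
                ((-1 : ℚ) ^ (rk J) * q ^ (d - rk J))
              = (q ^ (rk J) * q ^ (d - rk J)) *
                ((μ ⊥ J : ℚ) * (-1 : ℚ) ^ (rk J) * (q - 1) ^ (d - rk J)) := by ring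
            _ = _ := by rw [hq1]; ring
  rw [e3, e4]
  -- finish the LHS
  rw [Finset.mul_sum, Finset.mul_sum]
  refine Finset.sum_congr rfl fun F _ => ?_
  obtain ⟨m, hm⟩ : ∃ m, d = rk F + m := ⟨d - rk F, by have := hrkd F; omega⟩
  rw [hm]
  simp only [Nat.add_sub_cancel_left]
  set k := rk F with hk
  have h5 : (q⁻¹ - 1) ^ m * (-1 : ℚ) ^ m * q ^ m = (q - 1) ^ m := by
    rw [← mul_pow, ← mul_pow]
    congr 1
    field_simp
    ring
  have h7 : q⁻¹ ^ k * q ^ k = 1 := by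
    rw [← mul_pow, inv_mul_cancel₀ hq, one_pow]
  have h9 : q ^ (2 * (k + m)) = q ^ (k + m) * (q ^ k * q ^ m) := by
    rw [two_mul, pow_add, pow_add]
  rw [h9, pow_add (-1 : ℚ) k m]
  calc q ^ (k + m) * (q ^ k * q ^ m) *
        ((-1 : ℚ) ^ k * (-1 : ℚ) ^ m * ((μ ⊥ F : ℚ) * q⁻¹ ^ k * (q⁻¹ - 1) ^ m))
      = (q⁻¹ ^ k * q ^ k) * ((q⁻¹ - 1) ^ m * (-1 : ℚ) ^ m * q ^ m) *
          ((μ ⊥ F : ℚ) * (-1 : ℚ) ^ k * q ^ (k + m)) := by ring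
    _ = (μ ⊥ F : ℚ) * (-1 : ℚ) ^ k * q ^ (k + m) * (q - 1) ^ m := by
        rw [h5, h7]; ring
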